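/- If k₁,…,k_d ∈ ℕ and (x₁,…,x_d) ∈ [k₁−1,k₁) × ⋯ × [k_d−1,k_d), then H^⊞(x₁,…,x_d) = ∑_{S ⊆ {1,…,d}} H(k_{S₁},…,k_{S_d}) · {∏_{ℓ∉S} (k_ℓ − x_ℓ)} · {∏_{ℓ∈S} (x_ℓ − k_ℓ + 1)}, where k_{S_j} = k_j if j ∈ S and k_{S_j} = k_j − 1 otherwise. -/

import Mathlib

open MeasureTheory Filter Topology

noncomputable section

/-- Generalized inverse `F⁻¹(u) = inf {x | F x ≥ u}` of a distribution function,
with the convention `F⁻¹ 0 = -1`. -/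
def genInv (F : ℝ → ℝ) (u : ℝ) : ℝ :=
  if u = 0 then -1 else sInf {x : ℝ | u ≤ F x}

/-- Multilinear extension `F^⊞(x) = ∫₀¹ F (x + u) du` of a univariate distribution function. -/
def mlin1 (F : ℝ → ℝ) (x : ℝ) : ℝ := ∫ u in Set.Icc (0:ℝ) 1, F (x + u)

/-- Multilinear extension `H^⊞(x) = ∫_{[0,1]^d} H (x + u) du` of a `d`-variate
distribution function. -/
def mlin (d : ℕ) (H : (Fin d → ℝ) → ℝ) (x : Fin d → ℝ) : ℝ :=
  ∫ u in Set.Icc (0 : Fin d → ℝ) 1, H (x + u)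

/-- The multilinear extension copula `C^⊞(u) = H^⊞(F₁^⊞⁻¹(u₁),…,F_d^⊞⁻¹(u_d))`
of `H` with margins `F`. -/
def mlinCopula (d : ℕ) (H : (Fin d → ℝ) → ℝ) (F : Fin d → ℝ → ℝ) (u : Fin d → ℝ) : ℝ :=
  mlin d H (fun j => genInv (mlin1 (F j)) (u j))

/-- explicit multilinear form of `H^⊞` on the cell
`[k₁−1,k₁) × ⋯ × [k_d−1,k_d)`:
`H^⊞(x) = ∑_{S ⊆ {1,…,d}} H(k_S) ∏_{ℓ∉S}(k_ℓ − x_ℓ) ∏_{ℓ∈S}(x_ℓ − k_ℓ + 1)`,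
where `k_{S_j} = k_j` if `j ∈ S` and `k_{S_j} = k_j − 1` otherwise. -/
theorem multilinear_extension_cell_formula
    {Ω : Type*} [MeasurableSpace Ω] (P : Measure Ω) [IsProbabilityMeasure P]
    (d : ℕ) (hd : 1 ≤ d) (X : Ω → Fin d → ℝ) (hX : Measurable X)
    (hNat : ∀ ω j, ∃ k : ℕ, X ω j = k)
    (H : (Fin d → ℝ) → ℝ)
    (hH : ∀ x, H x = (P {ω | ∀ j, X ω j ≤ x j}).toReal)
    (k : Fin d → ℕ) (x : Fin d → ℝ)
    (hx : ∀ j, (k j : ℝ) - 1 ≤ x j ∧ x j < k j) :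
    mlin d H x
      = ∑ S : Finset (Fin d),
          H (fun j => if j ∈ S then (k j : ℝ) else (k j : ℝ) - 1)
            * (∏ ℓ ∈ Sᶜ, ((k ℓ : ℝ) - x ℓ))
            * (∏ ℓ ∈ S, (x ℓ - (k ℓ : ℝ) + 1)) := by
  classical
  set c : Fin d → ℝ := fun j => (k j : ℝ) - x j with hc
  have hc0 : ∀ j, 0 < c j := fun j => by
    have := (hx j).2; simp only [hc]; linarith
  have hc1 : ∀ j, c j ≤ 1 := fun j => by
    have := (hx j).1; simp only [hc]; linarith
  set kS : Finset (Fin d) → (Fin d → ℝ) :=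
    fun S j => if j ∈ S then (k j : ℝ) else (k j : ℝ) - 1 with hkS
  set A : Finset (Fin d) → Set (Fin d → ℝ) :=
    fun S => Set.pi Set.univ (fun j => if j ∈ S then Set.Ici (c j) else Set.Iio (c j)) with hA
  have hAmeas : ∀ S, MeasurableSet (A S) := by
    intro S
    refine MeasurableSet.univ_pi fun j => ?_
    by_cases h : j ∈ S <;> simp only [h, if_true, if_false] <;>
      first | exact measurableSet_Ici | exact measurableSet_Iio
  -- pointwise identity on the cube
  have hpt : ∀ u ∈ Set.Icc (0 : Fin d → ℝ) 1,
      H (x + u) = ∑ S : Finset (Fin d), (A S).indicator (fun _ => H (kS S)) u := by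
    intro u hu
    obtain ⟨hu0, hu1⟩ := hu
    set T : Finset (Fin d) := Finset.univ.filter (fun j => c j ≤ u j) with hT
    have hmemT : ∀ j, j ∈ T ↔ c j ≤ u j := by intro j; simp [hT]
    have huA : ∀ S, u ∈ A S ↔ ∀ j, (j ∈ S ↔ c j ≤ u j) := by
      intro S
      simp only [hA, Set.mem_univ_pi]
      refine forall_congr' fun j => ?_
      by_cases hjS : j ∈ S
      · simp [hjS]
      · simp [hjS, Set.mem_Iio, not_le]
    have hTA : u ∈ A T := (huA T).2 fun j => hmemT j
    have hsum : ∑ S : Finset (Fin d), (A S).indicator (fun _ => H (kS S)) u = H (kS T) := by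
      rw [Finset.sum_eq_single T]
      · rw [Set.indicator_of_mem hTA]
      · intro S _ hS
        rw [Set.indicator_of_notMem]
        intro hu'
        exact hS (Finset.ext fun j => ((huA S).1 hu' j).trans (hmemT j).symm)
      · simp
    rw [hsum, hH, hH]
    congr 2
    ext ω
    simp only [Set.mem_setOf_eq, Pi.add_apply]
    refine forall_congr' fun j => ?_
    obtain ⟨n, hn⟩ := hNat ω j
    rw [hn]
    have hxj1 := (hx j).1
    have hxj2 := (hx j).2
    have hu0j : (0 : ℝ) ≤ u j := hu0 j
    have hu1j : u j ≤ 1 := hu1 j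
    simp only [hkS]
    by_cases hjT : j ∈ T
    · have hcu : (k j : ℝ) - x j ≤ u j := (hmemT j).1 hjT
      simp only [hjT, if_true]
      constructor
      · intro h
        have h2 : (n : ℝ) < (k j : ℝ) + 1 := by linarith
        have h3 : n < k j + 1 := by exact_mod_cast h2
        exact_mod_cast Nat.lt_succ_iff.1 h3
      · intro h; linarith
    · have hcu : u j < (k j : ℝ) - x j := not_le.1 fun h => hjT ((hmemT j).2 h)
      simp only [hjT, if_false]
      constructor
      · intro h
        have h2 : (n : ℝ) < (k j : ℝ) := by linarith
        have h3 : n < k j := by exact_mod_cast h2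
        have h4 : (n : ℝ) + 1 ≤ (k j : ℝ) := by exact_mod_cast h3
        linarith
      · intro h; linarith
  have hIcc : MeasurableSet (Set.Icc (0 : Fin d → ℝ) 1) := measurableSet_Icc
  have hfin : volume (Set.Icc (0 : Fin d → ℝ) 1) < ⊤ := isCompact_Icc.measure_lt_top
  rw [mlin, setIntegral_congr_fun hIcc fun u hu => hpt u hu]
  have hint : ∀ S : Finset (Fin d),
      Integrable ((A S).indicator (fun _ => H (kS S)))
        (volume.restrict (Set.Icc (0 : Fin d → ℝ) 1)) := fun S =>
    (integrableOn_const hfin.ne).indicator (hAmeas S)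
  rw [integral_finset_sum _ fun S _ => hint S]
  refine Finset.sum_congr rfl fun S _ => ?_
  rw [setIntegral_indicator (hAmeas S), setIntegral_const, smul_eq_mul]
  have hseteq : Set.Icc (0 : Fin d → ℝ) 1 ∩ A S
      = Set.pi Set.univ (fun j => if j ∈ S then Set.Icc (c j) 1 else Set.Ico 0 (c j)) := by
    rw [hA, ← Set.pi_univ_Icc, ← Set.pi_inter_distrib]
    refine Set.pi_congr rfl fun j _ => ?_
    by_cases hjS : j ∈ S
    · simp only [hjS, if_true, Pi.zero_apply, Pi.one_apply]
      ext t
      simp only [Set.mem_inter_iff, Set.mem_Icc, Set.mem_Ici]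
      constructor
      · rintro ⟨⟨h0, h1⟩, h2⟩; exact ⟨h2, h1⟩
      · rintro ⟨h1, h2⟩; exact ⟨⟨le_trans (le_of_lt (hc0 j)) h1, h2⟩, h1⟩
    · simp only [hjS, if_false, Pi.zero_apply, Pi.one_apply]
      ext t
      simp only [Set.mem_inter_iff, Set.mem_Icc, Set.mem_Ico, Set.mem_Iio]
      constructor
      · rintro ⟨⟨h0, h1⟩, h2⟩; exact ⟨h0, h2⟩
      · rintro ⟨h0, h2⟩; exact ⟨⟨h0, le_trans (le_of_lt h2) (hc1 j)⟩, h2⟩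
  have hvol : (volume (Set.Icc (0 : Fin d → ℝ) 1 ∩ A S)).toReal
      = ∏ j, (if j ∈ S then (1 - c j) else c j) := by
    rw [hseteq, volume_pi_pi, ENNReal.toReal_prod]
    refine Finset.prod_congr rfl fun j _ => ?_
    by_cases hjS : j ∈ S
    · simp only [hjS, if_true]
      rw [Real.volume_Icc, ENNReal.toReal_ofReal (by have := hc1 j; linarith)]
    · simp only [hjS, if_false]
      rw [Real.volume_Ico, ENNReal.toReal_ofReal (by have := hc0 j; linarith)]
      ring
  rw [measureReal_def, hvol, ← Finset.prod_mul_prod_compl S (fun j => if j ∈ S then (1 - c j) else c j)]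
  have h1 : ∏ j ∈ S, (if j ∈ S then (1 - c j) else c j) = ∏ ℓ ∈ S, (x ℓ - (k ℓ : ℝ) + 1) := by
    refine Finset.prod_congr rfl fun j hj => ?_
    simp only [hj, if_true, hc]; ring
  have h2 : ∏ j ∈ Sᶜ, (if j ∈ S then (1 - c j) else c j) = ∏ ℓ ∈ Sᶜ, ((k ℓ : ℝ) - x ℓ) := by
    refine Finset.prod_congr rfl fun j hj => ?_
    have : j ∉ S := Finset.mem_compl.1 hj
    simp only [this, if_false, hc]
  rw [h1, h2, hkS]
  ring
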